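/- Let G = G₁ *_K G₂ be an amalgamated product with K infinite and β₁^{(2)}(K) = 0, where G₁, G₂ are finitely generated, and suppose RG(Gⱼ, (Gⱼ ∩ N_i)) = β₁^{(2)}(Gⱼ) for j = 1,2 for a normal chain (N_i) in G with trivial intersection. Then RG(G, (N_i)) = β₁^{(2)}(G) = β₁^{(2)}(G₁) + β₁^{(2)}(G₂). -/

import Mathlib

open Monoid Filter

/-- `ngen G` is `d(G)`, the minimal number of generators of the group `G`. -/
noncomputable def ngen (G : Type*) [Group G] : ℕ :=
  sInf {n | ∃ S : Finset G, S.card = n ∧ Subgroup.closure (S : Set G) = ⊤}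

/-- The two-element family `A, B` of groups, indexed by `Bool`. -/
abbrev Fam (A B : Type u) : Bool → Type u := fun b => bif b then A else B

instance famGroup {A B : Type u} [Group A] [Group B] : ∀ b, Group (Fam A B b) := fun b =>
  match b with
  | true => ‹Group A›
  | false => ‹Group B›

/-- The pair of homomorphisms `f : C →* A`, `g : C →* B` as a family over `Bool`, so that
`Monoid.PushoutI (fam2 f g)` is the amalgamated free product `A *_C B`. -/
abbrev fam2 {A B : Type u} {C : Type v} [Group A] [Group B] [Group C]
    (f : C →* A) (g : C →* B) : ∀ b, C →* Fam A B b := fun b =>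
  match b with
  | true => f
  | false => g

open Pointwise
lemma ngen_le {G : Type*} [Group G] {S : Finset G} (h : Subgroup.closure (S : Set G) = ⊤) :
    ngen G ≤ S.card := Nat.sInf_le ⟨S, rfl, h⟩

lemma exists_ngen (G : Type*) [Group G] [Group.FG G] :
    ∃ S : Finset G, S.card = ngen G ∧ Subgroup.closure (S : Set G) = ⊤ := by
  have hne : {n | ∃ S : Finset G, S.card = n ∧ Subgroup.closure (S : Set G) = ⊤}.Nonempty := by
    obtain ⟨S, hS⟩ := (Group.FG.out (G := G))
    exact ⟨S.card, S, rfl, hS⟩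
  exact Nat.sInf_mem hne

lemma ngen_eq_of_mulEquiv {G H : Type*} [Group G] [Group H] (e : G ≃* H) :
    ngen G = ngen H := by
  unfold ngen
  congr 1
  ext n
  classical
  constructor
  · rintro ⟨S, rfl, hS⟩
    refine ⟨S.image e, Finset.card_image_of_injective _ e.injective, ?_⟩
    rw [Finset.coe_image]
    show Subgroup.closure (⇑e.toMonoidHom '' (S : Set G)) = ⊤
    rw [← MonoidHom.map_closure e.toMonoidHom, hS]
    exact Subgroup.map_top_of_surjective _ e.surjective
  · rintro ⟨S, rfl, hS⟩
    refine ⟨S.image e.symm, Finset.card_image_of_injective _ e.symm.injective, ?_⟩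
    rw [Finset.coe_image]
    show Subgroup.closure (⇑e.symm.toMonoidHom '' (S : Set H)) = ⊤
    rw [← MonoidHom.map_closure e.symm.toMonoidHom, hS]
    exact Subgroup.map_top_of_surjective _ e.symm.surjective

lemma ngen_subgroup_le {G : Type*} [Group G] (N : Subgroup G) (S : Finset G)
    (hsub : (S : Set G) ⊆ (N : Set G)) (hcl : Subgroup.closure (S : Set G) = N) :
    ngen ↥N ≤ S.card := by
  classical
  let emb : {a // a ∈ S} ↪ ↥N :=
    ⟨fun x => ⟨x.1, hsub x.2⟩, by
      intro x y hxy
      exact Subtype.ext (by simpa using congrArg Subtype.val hxy)⟩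
  let T : Finset ↥N := S.attach.map emb
  have hTcard : T.card = S.card := by simp [T]
  have himg : (⇑N.subtype '' (T : Set ↥N)) = (S : Set G) := by
    ext x
    constructor
    · rintro ⟨y, hy, rfl⟩
      simp only [T, Finset.coe_map, Set.mem_image, Finset.mem_coe, Finset.mem_map] at hy
      obtain ⟨z, hz, rfl⟩ := hy
      exact z.2
    · intro hx
      have hx' : x ∈ S := Finset.mem_coe.mp hx
      refine ⟨emb ⟨x, hx'⟩, ?_, rfl⟩
      rw [Finset.mem_coe, Finset.mem_map]
      exact ⟨⟨x, hx'⟩, Finset.mem_attach _ _, rfl⟩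
  have hTgen : Subgroup.closure (T : Set ↥N) = ⊤ := by
    apply Subgroup.map_injective (N.subtype_injective)
    rw [MonoidHom.map_closure, himg, hcl, ← MonoidHom.range_eq_map, Subgroup.range_subtype]
  exact hTcard ▸ ngen_le hTgen

lemma tendsto_index_atTop {H : Type*} [Group H] [Infinite H] (P : ℕ → Subgroup H)
    (hchain : ∀ i, P (i + 1) ≤ P i) (hfin : ∀ i, (P i).index ≠ 0)
    (hint : (⨅ i, P i) = ⊥) :
    Tendsto (fun i => (P i).index) atTop atTop := by
  have hle : Antitone P := antitone_nat_of_succ_le hchain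
  have hmono : Monotone fun i => (P i).index := fun i j hij =>
    Nat.le_of_dvd (Nat.pos_of_ne_zero (hfin j)) (Subgroup.index_dvd_of_le (hle hij))
  refine tendsto_atTop_atTop_of_monotone hmono ?_
  by_contra hbd
  push_neg at hbd
  obtain ⟨b, hb⟩ := hbd
  have hne : (Set.range fun i => (P i).index).Nonempty := ⟨_, ⟨0, rfl⟩⟩
  have hbdd : BddAbove (Set.range fun i => (P i).index) := by
    refine ⟨b, ?_⟩
    rintro x ⟨i, rfl⟩
    exact (hb i).le
  obtain ⟨i₀, hi₀⟩ := Nat.sSup_mem hne hbdd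
  have hstab : ∀ i, i₀ ≤ i → P i = P i₀ := by
    intro i hi
    have h1 : (P i).index = (P i₀).index := by
      refine le_antisymm ?_ (hmono hi)
      have := le_csSup hbdd (Set.mem_range_self (f := fun i => (P i).index) i)
      simpa [← hi₀] using this
    have h2 := Subgroup.relIndex_mul_index (hle hi)
    rw [h1] at h2
    have : (P i).relIndex (P i₀) = 1 := by
      have hm := hfin i₀
      have : (P i).relIndex (P i₀) * (P i₀).index = 1 * (P i₀).index := by
        rw [h2, one_mul]
      exact Nat.eq_of_mul_eq_mul_right (Nat.pos_of_ne_zero hm) this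
    exact le_antisymm (hle hi) (Subgroup.relIndex_eq_one.mp this)
  have hbot : P i₀ = ⊥ := by
    rw [← le_bot_iff, ← hint]
    refine le_iInf fun i => ?_
    rcases le_total i₀ i with h | h
    · exact (hstab i h).ge
    · exact hle h
  have := hfin i₀
  rw [hbot, Subgroup.index_bot] at this
  have : Finite H := (Nat.card_ne_zero.mp this).2
  exact not_finite H


lemma aux_step {G : Type*} [Group G] (N D : Subgroup G) [hNn : N.Normal] (H : Subgroup G)
    (τ : G ⧸ (N ⊔ D) → G) (hτ : ∀ x, QuotientGroup.mk (τ x) = x)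
    (ν α : G → G) (hν : ∀ g, ν g ∈ N) (hα : ∀ g, α g ∈ D)
    (hdec : ∀ g, g = ν g * τ (QuotientGroup.mk g) * α g)
    (hconj : ∀ (x : G ⧸ (N ⊔ D)) (z : G), z ∈ N → z ∈ D → τ x * z * (τ x)⁻¹ ∈ H) :
    (∀ g a, a ∈ D → ∃ h ∈ H, ν (g * a) = ν g * h) ∧
      (∀ g m, m ∈ N → ∃ h ∈ H, ν (m * g) = m * ν g * h) := by
  constructor
  · intro g a ha
    have hmk : (QuotientGroup.mk (g * a) : G ⧸ (N ⊔ D)) = QuotientGroup.mk g := by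
      refine (QuotientGroup.eq.mpr ?_)
      have : (g * a)⁻¹ * g = a⁻¹ := by group
      rw [this]
      exact inv_mem (le_sup_right (a := N) ha)
    have hg' := hdec g
    have hga' := hdec (g * a)
    rw [hmk] at hga'
    set t := τ (QuotientGroup.mk g) with ht
    set n₁ := ν g with hn₁
    set n₂ := ν (g * a) with hn₂
    set a₁ := α g with ha₁
    set a₂ := α (g * a) with ha₂
    -- hg' : g = n₁ * t * a₁ ; hga' : g * a = n₂ * t * a₂
    have hmul : n₁ * t * a₁ * a = n₂ * t * a₂ := by rw [← hg', ← hga']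
    have key : n₂ = n₁ * (t * (a₁ * a * a₂⁻¹) * t⁻¹) := by
      have h2 : n₂ = n₁ * t * a₁ * a * a₂⁻¹ * t⁻¹ := by rw [hmul]; group
      rw [h2]; group
    have hzN : t * (a₁ * a * a₂⁻¹) * t⁻¹ ∈ N := by
      have : t * (a₁ * a * a₂⁻¹) * t⁻¹ = n₁⁻¹ * n₂ := by rw [key]; group
      rw [this]
      exact mul_mem (inv_mem (hν g)) (hν (g * a))
    have hzN' : a₁ * a * a₂⁻¹ ∈ N := by
      have h3 : a₁ * a * a₂⁻¹ = t⁻¹ * (t * (a₁ * a * a₂⁻¹) * t⁻¹) * t := by group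
      rw [h3]
      exact hNn.conj_mem' _ hzN t
    have hzD : a₁ * a * a₂⁻¹ ∈ D := mul_mem (mul_mem (hα g) ha) (inv_mem (hα (g * a)))
    exact ⟨_, hconj _ _ hzN' hzD, key⟩
  · intro g m hm
    have hmk : (QuotientGroup.mk (m * g) : G ⧸ (N ⊔ D)) = QuotientGroup.mk g := by
      refine (QuotientGroup.eq.mpr ?_)
      have : (m * g)⁻¹ * g = g⁻¹ * m⁻¹ * g := by group
      rw [this]
      exact le_sup_left (b := D) (hNn.conj_mem' _ (inv_mem hm) g)
    have hg' := hdec g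
    have hmg' := hdec (m * g)
    rw [hmk] at hmg'
    set t := τ (QuotientGroup.mk g) with ht
    set n₁ := ν g with hn₁
    set n₂ := ν (m * g) with hn₂
    set a₁ := α g with ha₁
    set a₂ := α (m * g) with ha₂
    have hmul : m * (n₁ * t * a₁) = n₂ * t * a₂ := by rw [← hg', ← hmg']
    have key : n₂ = m * n₁ * (t * (a₁ * a₂⁻¹) * t⁻¹) := by
      have h2 : n₂ = m * (n₁ * t * a₁) * a₂⁻¹ * t⁻¹ := by rw [hmul]; group
      rw [h2]; group
    have hzN : t * (a₁ * a₂⁻¹) * t⁻¹ ∈ N := by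
      have : t * (a₁ * a₂⁻¹) * t⁻¹ = n₁⁻¹ * m⁻¹ * n₂ := by rw [key]; group
      rw [this]
      exact mul_mem (mul_mem (inv_mem (hν g)) (inv_mem hm)) (hν (m * g))
    have hzN' : a₁ * a₂⁻¹ ∈ N := by
      have h3 : a₁ * a₂⁻¹ = t⁻¹ * (t * (a₁ * a₂⁻¹) * t⁻¹) * t := by group
      rw [h3]
      exact hNn.conj_mem' _ hzN t
    have hzD : a₁ * a₂⁻¹ ∈ D := mul_mem (hα g) (inv_mem (hα (m * g)))
    exact ⟨_, hconj _ _ hzN' hzD, key⟩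


lemma amalgam_gen {G : Type*} [Group G] (N A B C : Subgroup G) [hNn : N.Normal]
    (hAB : A ⊔ B = ⊤) (hCA : C ≤ A) (hCB : C ≤ B) (hN : N.index ≠ 0)
    (FA FB : Finset G) (hFA : Subgroup.closure (FA : Set G) = N ⊓ A)
    (hFB : Subgroup.closure (FB : Set G) = N ⊓ B) :
    ∃ S : Finset G, (S : Set G) ⊆ (N : Set G) ∧ Subgroup.closure (S : Set G) = N ∧
      S.card ≤ (N ⊔ A).index * FA.card + (N ⊔ B).index * FB.card + (N ⊔ C).index := by
  classical
  have finQ : ∀ D : Subgroup G, N ≤ D → Finite (G ⧸ D) := by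
    intro D hD
    have hDi : D.index ≠ 0 := fun h0 => hN (by
      have := Subgroup.index_dvd_of_le hD
      rw [h0] at this
      exact Nat.eq_zero_of_zero_dvd this)
    rw [Subgroup.index_eq_card] at hDi
    exact (Nat.card_ne_zero.mp hDi).2
  haveI fQA : Finite (G ⧸ (N ⊔ A)) := finQ _ le_sup_left
  haveI fQB : Finite (G ⧸ (N ⊔ B)) := finQ _ le_sup_left
  haveI fQC : Finite (G ⧸ (N ⊔ C)) := finQ _ le_sup_left
  haveI := Fintype.ofFinite (G ⧸ (N ⊔ A))
  haveI := Fintype.ofFinite (G ⧸ (N ⊔ B))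
  haveI := Fintype.ofFinite (G ⧸ (N ⊔ C))
  -- sections
  let τ : ∀ D : Subgroup G, G ⧸ (N ⊔ D) → G := fun D x =>
    if x = QuotientGroup.mk 1 then 1 else Quotient.out x
  have hτ : ∀ (D : Subgroup G) (x : G ⧸ (N ⊔ D)), QuotientGroup.mk (τ D x) = x := by
    intro D x
    by_cases h : x = QuotientGroup.mk 1
    · have h1 : τ D x = 1 := by simp only [τ, if_pos h]
      rw [h1, h]
    · simp only [τ, if_neg h]
      exact QuotientGroup.out_eq' x
  have hτ1 : ∀ D : Subgroup G, τ D (QuotientGroup.mk 1) = 1 := by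
    intro D; simp only [τ, if_pos rfl]
  -- decompositions
  have dec : ∀ (D : Subgroup G) (g : G),
      ∃ p : G × G, p.1 ∈ N ∧ p.2 ∈ D ∧ g = p.1 * τ D (QuotientGroup.mk g) * p.2 := by
    intro D g
    have h1 : (τ D (QuotientGroup.mk g))⁻¹ * g ∈ N ⊔ D :=
      QuotientGroup.eq.mp (hτ D (QuotientGroup.mk g))
    have h2 : (τ D (QuotientGroup.mk g))⁻¹ * g ∈ ((N : Set G) * (D : Set G)) := by
      rw [← Subgroup.normal_mul]; exact h1
    obtain ⟨n₀, hn₀, d₀, hd₀, hmul⟩ := h2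
    set t := τ D (QuotientGroup.mk g) with ht
    refine ⟨(t * n₀ * t⁻¹, d₀), hNn.conj_mem n₀ hn₀ t, hd₀, ?_⟩
    have hmul' : n₀ * d₀ = t⁻¹ * g := hmul
    have : g = t * (n₀ * d₀) := by rw [hmul']; group
    rw [this]; group
  choose νA' hνA hαA' hdecA using fun g => dec A g
  choose νB' hνB hαB' hdecB using fun g => dec B g
  choose νC' hνC hαC' hdecC using fun g => dec C g
  set νA : G → G := fun g => (νA' g).1 with hνAdef
  set αA : G → G := fun g => (νA' g).2 with hαAdef
  set νB : G → G := fun g => (νB' g).1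
  set αB : G → G := fun g => (νB' g).2
  -- generating set
  let SA : Finset G :=
    Finset.univ.biUnion fun x : G ⧸ (N ⊔ A) => FA.image fun y => τ A x * y * (τ A x)⁻¹
  let SB : Finset G :=
    Finset.univ.biUnion fun x : G ⧸ (N ⊔ B) => FB.image fun y => τ B x * y * (τ B x)⁻¹
  let SE : Finset G :=
    Finset.univ.image fun x : G ⧸ (N ⊔ C) => (νA (τ C x))⁻¹ * νB (τ C x)
  have hFA' : (FA : Set G) ⊆ ((N ⊓ A : Subgroup G) : Set G) := hFA ▸ Subgroup.subset_closure
  have hFB' : (FB : Set G) ⊆ ((N ⊓ B : Subgroup G) : Set G) := hFB ▸ Subgroup.subset_closure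
  set H := Subgroup.closure ((SA ∪ SB ∪ SE : Finset G) : Set G) with hHdef
  -- subset of N
  have hSsubN : ((SA ∪ SB ∪ SE : Finset G) : Set G) ⊆ (N : Set G) := by
    intro w hw
    simp only [Finset.coe_union, Set.mem_union, Finset.mem_coe] at hw
    rcases hw with (hw | hw) | hw
    · obtain ⟨x, -, hw⟩ := Finset.mem_biUnion.mp hw
      obtain ⟨y, hy, rfl⟩ := Finset.mem_image.mp hw
      exact hNn.conj_mem y (hFA' hy).1 _
    · obtain ⟨x, -, hw⟩ := Finset.mem_biUnion.mp hw
      obtain ⟨y, hy, rfl⟩ := Finset.mem_image.mp hw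
      exact hNn.conj_mem y (hFB' hy).1 _
    · obtain ⟨x, -, rfl⟩ := Finset.mem_image.mp hw
      exact mul_mem (inv_mem (hνA _)) (hνB _)
  -- conjugation generators lie in H
  have hconjA : ∀ (x : G ⧸ (N ⊔ A)) (z : G), z ∈ N → z ∈ A → τ A x * z * (τ A x)⁻¹ ∈ H := by
    intro x z hzN hzA
    have hz : z ∈ Subgroup.closure (FA : Set G) := by rw [hFA]; exact ⟨hzN, hzA⟩
    have himg : τ A x * z * (τ A x)⁻¹ ∈
        Subgroup.map (MulAut.conj (τ A x)).toMonoidHom (Subgroup.closure (FA : Set G)) :=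
      ⟨z, hz, by simp [MulAut.conj_apply, mul_assoc]⟩
    rw [MonoidHom.map_closure] at himg
    refine Subgroup.closure_mono ?_ himg
    rintro w ⟨y, hy, rfl⟩
    refine Finset.mem_coe.mpr (Finset.mem_union_left _ (Finset.mem_union_left _ ?_))
    refine Finset.mem_biUnion.mpr ⟨x, Finset.mem_univ x, ?_⟩
    exact Finset.mem_image.mpr ⟨y, hy, by simp [MulAut.conj_apply, mul_assoc]⟩
  have hconjB : ∀ (x : G ⧸ (N ⊔ B)) (z : G), z ∈ N → z ∈ B → τ B x * z * (τ B x)⁻¹ ∈ H := by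
    intro x z hzN hzB
    have hz : z ∈ Subgroup.closure (FB : Set G) := by rw [hFB]; exact ⟨hzN, hzB⟩
    have himg : τ B x * z * (τ B x)⁻¹ ∈
        Subgroup.map (MulAut.conj (τ B x)).toMonoidHom (Subgroup.closure (FB : Set G)) :=
      ⟨z, hz, by simp [MulAut.conj_apply, mul_assoc]⟩
    rw [MonoidHom.map_closure] at himg
    refine Subgroup.closure_mono ?_ himg
    rintro w ⟨y, hy, rfl⟩
    refine Finset.mem_coe.mpr (Finset.mem_union_left _ (Finset.mem_union_right _ ?_))
    refine Finset.mem_biUnion.mpr ⟨x, Finset.mem_univ x, ?_⟩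
    exact Finset.mem_image.mpr ⟨y, hy, by simp [MulAut.conj_apply, mul_assoc]⟩
  obtain ⟨stepA, stepNA⟩ := aux_step N A H (τ A) (hτ A) νA αA hνA hαA' hdecA hconjA
  obtain ⟨stepB, stepNB⟩ := aux_step N B H (τ B) (hτ B) νB αB hνB hαB' hdecB hconjB
  have hedge : ∀ x : G ⧸ (N ⊔ C), (νA (τ C x))⁻¹ * νB (τ C x) ∈ H := by
    intro x
    refine Subgroup.subset_closure (Finset.mem_coe.mpr (Finset.mem_union_right _ ?_))
    exact Finset.mem_image.mpr ⟨x, Finset.mem_univ x, rfl⟩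
  have linkAB : ∀ g : G, (νA g ∈ H ↔ νB g ∈ H) := by
    intro g
    have hdc := hdecC g
    set m := (νC' g).1 with hm
    set c := (νC' g).2 with hc
    set s := τ C (QuotientGroup.mk g) with hs
    have hgsc : g = m * (s * c) := by rw [hdc]; group
    obtain ⟨h₁, hh₁, he₁⟩ := stepNA (s * c) m (hνC g)
    obtain ⟨h₂, hh₂, he₂⟩ := stepA s c (hCA (hαC' g))
    obtain ⟨h₃, hh₃, he₃⟩ := stepNB (s * c) m (hνC g)
    obtain ⟨h₄, hh₄, he₄⟩ := stepB s c (hCB (hαC' g))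
    have e1 : νA g = m * (νA s * h₂) * h₁ := by
      conv_lhs => rw [hgsc]
      rw [he₁, he₂]
    have e2 : νB g = m * (νB s * h₄) * h₃ := by
      conv_lhs => rw [hgsc]
      rw [he₃, he₄]
    have hE := hedge (QuotientGroup.mk g)
    have c1 : (νA g ∈ H ↔ m * νA s ∈ H) := by
      rw [e1, show m * (νA s * h₂) * h₁ = m * νA s * h₂ * h₁ by group,
        Subgroup.mul_mem_cancel_right _ hh₁, Subgroup.mul_mem_cancel_right _ hh₂]
    have c2 : (νB g ∈ H ↔ m * νB s ∈ H) := by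
      rw [e2, show m * (νB s * h₄) * h₃ = m * νB s * h₄ * h₃ by group,
        Subgroup.mul_mem_cancel_right _ hh₃, Subgroup.mul_mem_cancel_right _ hh₄]
    rw [c1, c2, show m * νB s = m * νA s * ((νA s)⁻¹ * νB s) by group,
      Subgroup.mul_mem_cancel_right _ hE]
  -- base case
  have hν1A : νA 1 ∈ H := by
    have h0 := hdecA 1
    rw [hτ1 A] at h0
    rw [mul_one] at h0
    have hval : νA 1 * αA 1 = 1 := h0.symm
    have hA1 : νA 1 ∈ A := by
      have h5 : νA 1 = (αA 1)⁻¹ := eq_inv_of_mul_eq_one_left hval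
      rw [h5]; exact inv_mem (hαA' 1)
    have := hconjA (QuotientGroup.mk 1) (νA 1) (hνA 1) hA1
    rw [hτ1 A] at this
    simpa using this
  -- main induction
  have hQ : ∀ g : G, ∀ h : G, (νA h ∈ H ↔ νA (h * g) ∈ H) := by
    intro g
    have hg : g ∈ Subgroup.closure ((A : Set G) ∪ (B : Set G)) := by
      rw [← Subgroup.sup_eq_closure, hAB]; exact Subgroup.mem_top g
    refine Subgroup.closure_induction ?_ ?_ ?_ ?_ hg
    · rintro y (hy | hy) h
      · obtain ⟨h', hh', he⟩ := stepA h y hy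
        rw [he, Subgroup.mul_mem_cancel_right _ hh']
      · obtain ⟨h', hh', he⟩ := stepB h y hy
        rw [linkAB h, linkAB (h * y), he, Subgroup.mul_mem_cancel_right _ hh']
    · intro h; rw [mul_one]
    · intro y z _ _ ihy ihz h
      rw [show h * (y * z) = h * y * z from (mul_assoc _ _ _).symm]
      exact (ihy h).trans (ihz (h * y))
    · intro y _ ihy h
      have := ihy (h * y⁻¹)
      rw [inv_mul_cancel_right] at this
      exact this.symm
  refine ⟨SA ∪ SB ∪ SE, hSsubN, ?_, ?_⟩
  · -- closure = N
    refine le_antisymm ((Subgroup.closure_le N).mpr hSsubN) ?_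
    intro w hw
    have h1 : νA w ∈ H := by
      have := hQ w 1
      rw [one_mul] at this
      exact this.mp hν1A
    have hmkw : (QuotientGroup.mk w : G ⧸ (N ⊔ A)) = QuotientGroup.mk 1 := by
      refine QuotientGroup.eq.mpr ?_
      rw [mul_one]
      exact inv_mem (le_sup_left (b := A) hw)
    have hdw := hdecA w
    rw [hmkw, hτ1 A, mul_one] at hdw
    have h2 : νA w * αA w = w := hdw.symm
    have hαw : αA w = (νA w)⁻¹ * w := eq_inv_mul_of_mul_eq h2
    have hαN : αA w ∈ N := by rw [hαw]; exact mul_mem (inv_mem (hνA w)) hw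
    have hαH : αA w ∈ H := by
      have := hconjA (QuotientGroup.mk 1) (αA w) hαN (hαA' w)
      rw [hτ1 A] at this
      simpa using this
    show w ∈ H
    rw [hdw]
    exact mul_mem h1 hαH
  · -- cardinality
    have hcA : SA.card ≤ (N ⊔ A).index * FA.card := by
      refine le_trans (Finset.card_biUnion_le) ?_
      refine le_trans (Finset.sum_le_sum fun x _ => Finset.card_image_le) ?_
      rw [Finset.sum_const, smul_eq_mul, Subgroup.index_eq_card, Nat.card_eq_fintype_card]
      simp [Finset.card_univ]
    have hcB : SB.card ≤ (N ⊔ B).index * FB.card := by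
      refine le_trans (Finset.card_biUnion_le) ?_
      refine le_trans (Finset.sum_le_sum fun x _ => Finset.card_image_le) ?_
      rw [Finset.sum_const, smul_eq_mul, Subgroup.index_eq_card, Nat.card_eq_fintype_card]
      simp [Finset.card_univ]
    have hcE : SE.card ≤ (N ⊔ C).index := by
      refine le_trans (Finset.card_image_le) ?_
      rw [Subgroup.index_eq_card, Nat.card_eq_fintype_card, Finset.card_univ]
    calc (SA ∪ SB ∪ SE).card ≤ (SA ∪ SB).card + SE.card := Finset.card_union_le _ _
      _ ≤ SA.card + SB.card + SE.card :=
          Nat.add_le_add_right (Finset.card_union_le _ _) _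
      _ ≤ (N ⊔ A).index * FA.card + (N ⊔ B).index * FB.card + (N ⊔ C).index := by
          omega



set_option maxHeartbeats 2000000 in
/-- Let `G = G₁ *_K G₂` with `K` infinite and `β₁⁽²⁾(K) = 0`, where `G₁, G₂` are finitely
generated, and suppose `RG(Gⱼ, (Gⱼ ∩ N i)) = β₁⁽²⁾(Gⱼ)` for `j = 1, 2` along a normal
chain `(N i)` of `G` with trivial intersection. Then
`RG(G, (N i)) = β₁⁽²⁾(G) = β₁⁽²⁾(G₁) + β₁⁽²⁾(G₂)`. Here `β` is an abstract first
`L²`-Betti number, assumed to satisfy the amalgam formula for this amalgam (with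
`1/|X| = 0` for `X` infinite) and the general lower-bound `RG ≥ β₁⁽²⁾`. -/
theorem rank_gradient_amalgam_eq_l2_betti (β : (G : Type) → [inst : Group G] → ℝ)
    {G₁ G₂ K : Type} [Group G₁] [Group G₂] [Group K]
    [Group.FG G₁] [Group.FG G₂] [Infinite K]
    (f : K →* G₁) (g : K →* G₂) (hf : Function.Injective f) (hg : Function.Injective g)
    (hβK : β K = 0)
    (hform : β (PushoutI (fam2 f g)) =
      β G₁ - (Nat.card G₁ : ℝ)⁻¹ + β G₂ - (Nat.card G₂ : ℝ)⁻¹ + (Nat.card K : ℝ)⁻¹)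
    (N : ℕ → Subgroup (PushoutI (fam2 f g)))
    (hchain : ∀ i, N (i + 1) ≤ N i) (hnorm : ∀ i, (N i).Normal)
    (hfin : ∀ i, (N i).index ≠ 0) (hint : (⨅ i, N i) = ⊥)
    (hRGge : ∀ L : ℝ,
      Tendsto (fun i => ((ngen ↥(N i) : ℝ) - 1) / ((N i).index : ℝ)) atTop (nhds L) →
      β (PushoutI (fam2 f g)) ≤ L)
    (h1 : Tendsto (fun i =>
        ((ngen ↥((N i).subgroupOf (PushoutI.of (φ := fam2 f g) true).range) : ℝ) - 1) /
          ((N i).relIndex (PushoutI.of (φ := fam2 f g) true).range : ℝ)) atTop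
        (nhds (β G₁)))
    (h2 : Tendsto (fun i =>
        ((ngen ↥((N i).subgroupOf (PushoutI.of (φ := fam2 f g) false).range) : ℝ) - 1) /
          ((N i).relIndex (PushoutI.of (φ := fam2 f g) false).range : ℝ)) atTop
        (nhds (β G₂))) :
    Tendsto (fun i => ((ngen ↥(N i) : ℝ) - 1) / ((N i).index : ℝ)) atTop
      (nhds (β (PushoutI (fam2 f g)))) ∧
    β (PushoutI (fam2 f g)) = β G₁ + β G₂ := by
  classical
  have injφ : ∀ b, Function.Injective (fam2 f g b) := by
    intro b; cases b
    · exact hg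
    · exact hf
  have injOf : ∀ b, Function.Injective (PushoutI.of (φ := fam2 f g) b) :=
    fun b => PushoutI.of_injective injφ b
  have injBase : Function.Injective (PushoutI.base (fam2 f g)) :=
    PushoutI.base_injective injφ
  haveI : Infinite G₁ := Infinite.of_injective _ hf
  haveI : Infinite G₂ := Infinite.of_injective _ hg
  haveI : Infinite (PushoutI (fam2 f g)) := Infinite.of_injective _ injBase
  set Ar := (PushoutI.of (φ := fam2 f g) true).range with hAr
  set Br := (PushoutI.of (φ := fam2 f g) false).range with hBr
  set Cr := (PushoutI.base (fam2 f g)).range with hCr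
  have eA : G₁ ≃* Ar := MonoidHom.ofInjective (injOf true)
  have eB : G₂ ≃* Br := MonoidHom.ofInjective (injOf false)
  have eC : K ≃* Cr := MonoidHom.ofInjective injBase
  haveI : Infinite ↥Ar := Infinite.of_injective eA eA.injective
  haveI : Infinite ↥Br := Infinite.of_injective eB eB.injective
  haveI : Infinite ↥Cr := Infinite.of_injective eC eC.injective
  have hbase_eqA : ∀ k : K, PushoutI.base (fam2 f g) k = PushoutI.of (φ := fam2 f g) true (f k) := by
    intro k
    rw [← PushoutI.of_comp_eq_base true]
    rfl
  have hbase_eqB : ∀ k : K, PushoutI.base (fam2 f g) k = PushoutI.of (φ := fam2 f g) false (g k) := by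
    intro k
    rw [← PushoutI.of_comp_eq_base false]
    rfl
  have hCA : Cr ≤ Ar := by
    rintro x ⟨k, rfl⟩
    exact ⟨f k, (hbase_eqA k).symm⟩
  have hCB : Cr ≤ Br := by
    rintro x ⟨k, rfl⟩
    exact ⟨g k, (hbase_eqB k).symm⟩
  have hAB : Ar ⊔ Br = ⊤ := by
    rw [eq_top_iff]
    have hall : ∀ x : PushoutI (fam2 f g), x ∈ Ar ⊔ Br := by
      intro x
      induction x using PushoutI.induction_on with
      | of b gb =>
        cases b
        · exact le_sup_right (α := Subgroup (PushoutI (fam2 f g))) (a := Ar) ⟨gb, rfl⟩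
        · exact le_sup_left (α := Subgroup (PushoutI (fam2 f g))) (b := Br) ⟨gb, rfl⟩
      | base h => exact le_sup_left (α := Subgroup (PushoutI (fam2 f g))) (b := Br) (hCA ⟨h, rfl⟩)
      | mul x y hx hy => exact mul_mem hx hy
    exact fun x _ => hall x
  haveI hFGp : Group.FG (PushoutI (fam2 f g)) := by
    obtain ⟨S₁, hS₁⟩ := Group.FG.out (G := G₁)
    obtain ⟨S₂, hS₂⟩ := Group.FG.out (G := G₂)
    refine ⟨⟨(S₁.image (PushoutI.of (φ := fam2 f g) true)) ∪
      (S₂.image (PushoutI.of (φ := fam2 f g) false)), ?_⟩⟩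
    rw [Finset.coe_union, Finset.coe_image, Finset.coe_image, Subgroup.closure_union,
      ← MonoidHom.map_closure, ← MonoidHom.map_closure, hS₁, hS₂,
      ← MonoidHom.range_eq_map, ← MonoidHom.range_eq_map, ← hAr, ← hBr]
    exact hAB
  have hrel_ne : ∀ (i : ℕ) (Lr : Subgroup (PushoutI (fam2 f g))), (N i).relIndex Lr ≠ 0 := by
    intro i Lr h0
    haveI := hnorm i
    have hdvd := Subgroup.relIndex_dvd_index_of_normal (H := N i) (K := Lr)
    rw [h0] at hdvd
    exact hfin i (Nat.eq_zero_of_zero_dvd hdvd)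
  have hsubchain : ∀ (Lr : Subgroup (PushoutI (fam2 f g))) (i : ℕ),
      (N (i + 1)).subgroupOf Lr ≤ (N i).subgroupOf Lr :=
    fun Lr i => Subgroup.comap_mono (hchain i)
  have hsubinf : ∀ Lr : Subgroup (PushoutI (fam2 f g)), (⨅ i, (N i).subgroupOf Lr) = ⊥ := by
    intro Lr
    ext x
    simp only [Subgroup.mem_iInf, Subgroup.mem_subgroupOf, Subgroup.mem_bot]
    constructor
    · intro hx
      have hx2 : (x : PushoutI (fam2 f g)) ∈ ⨅ i, N i := Subgroup.mem_iInf.mpr hx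
      rw [hint] at hx2
      exact Subtype.ext (by simpa using hx2)
    · rintro rfl
      intro i
      simpa using (N i).one_mem
  have htendArel : Tendsto (fun i => ((N i).relIndex Ar : ℝ)) atTop atTop :=
    tendsto_natCast_atTop_atTop.comp (tendsto_index_atTop (fun i => (N i).subgroupOf Ar)
      (hsubchain Ar) (fun i => hrel_ne i Ar) (hsubinf Ar))
  have htendBrel : Tendsto (fun i => ((N i).relIndex Br : ℝ)) atTop atTop :=
    tendsto_natCast_atTop_atTop.comp (tendsto_index_atTop (fun i => (N i).subgroupOf Br)
      (hsubchain Br) (fun i => hrel_ne i Br) (hsubinf Br))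
  have htendCrel : Tendsto (fun i => ((N i).relIndex Cr : ℝ)) atTop atTop :=
    tendsto_natCast_atTop_atTop.comp (tendsto_index_atTop (fun i => (N i).subgroupOf Cr)
      (hsubchain Cr) (fun i => hrel_ne i Cr) (hsubinf Cr))
  have hinvA : Tendsto (fun i => (((N i).relIndex Ar : ℝ))⁻¹) atTop (nhds 0) :=
    htendArel.inv_tendsto_atTop
  have hinvB : Tendsto (fun i => (((N i).relIndex Br : ℝ))⁻¹) atTop (nhds 0) :=
    htendBrel.inv_tendsto_atTop
  have hinvC : Tendsto (fun i => (((N i).relIndex Cr : ℝ))⁻¹) atTop (nhds 0) :=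
    htendCrel.inv_tendsto_atTop
  -- Antitone of d i / n i via Schreier
  have hdstep : ∀ i, ngen ↥(N (i + 1)) ≤ (N (i + 1)).relIndex (N i) * ngen ↥(N i) := by
    intro i
    haveI : (N i).FiniteIndex := ⟨hfin i⟩
    haveI : Group.FG ↥(N i) := Subgroup.fg_of_index_ne_zero (N i)
    obtain ⟨S, hScard, hSgen⟩ := exists_ngen ↥(N i)
    have hm_ne : (N (i + 1)).relIndex (N i) ≠ 0 := by
      intro h0
      have h2 := Subgroup.relIndex_mul_index (hchain i)
      rw [h0, zero_mul] at h2
      exact hfin (i + 1) h2.symm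
    haveI : ((N (i + 1)).subgroupOf (N i)).FiniteIndex := ⟨hm_ne⟩
    obtain ⟨T, hTcard, hTgen⟩ :=
      Subgroup.exists_finset_card_le_mul ((N (i + 1)).subgroupOf (N i)) hSgen
    have h5 := ngen_le hTgen
    have h6 : ngen ↥(N (i + 1)) = ngen ↥((N (i + 1)).subgroupOf (N i)) :=
      ngen_eq_of_mulEquiv (Subgroup.subgroupOfEquivOfLe (hchain i)).symm
    rw [h6, hScard] at *
    exact le_trans h5 hTcard
  have hFanti : Antitone fun i => (ngen ↥(N i) : ℝ) / ((N i).index : ℝ) := by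
    apply antitone_nat_of_succ_le
    intro i
    have hmn := Subgroup.relIndex_mul_index (hchain i)
    have hm_ne : (N (i + 1)).relIndex (N i) ≠ 0 := by
      intro h0
      rw [h0, zero_mul] at hmn
      exact hfin (i + 1) hmn.symm
    have hm0 : (0:ℝ) < ((N (i + 1)).relIndex (N i) : ℝ) := by
      exact_mod_cast Nat.pos_of_ne_zero hm_ne
    have hn0 : (0:ℝ) < ((N i).index : ℝ) := by
      exact_mod_cast Nat.pos_of_ne_zero (hfin i)
    have step := hdstep i
    rw [← hmn]
    push_cast
    calc (ngen ↥(N (i + 1)) : ℝ) / (((N (i + 1)).relIndex (N i) : ℝ) * ((N i).index : ℝ))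
        ≤ (((N (i + 1)).relIndex (N i) : ℝ) * (ngen ↥(N i) : ℝ)) /
          (((N (i + 1)).relIndex (N i) : ℝ) * ((N i).index : ℝ)) := by
          gcongr
          exact_mod_cast step
      _ = (ngen ↥(N i) : ℝ) / ((N i).index : ℝ) := by
          rw [mul_div_mul_left _ _ (ne_of_gt hm0)]
  have hBdd : BddBelow (Set.range fun i => (ngen ↥(N i) : ℝ) / ((N i).index : ℝ)) := by
    refine ⟨0, ?_⟩
    rintro x ⟨i, rfl⟩
    positivity
  have hFtend := tendsto_atTop_ciInf hFanti hBdd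
  set L := ⨅ i, (ngen ↥(N i) : ℝ) / ((N i).index : ℝ) with hL
  have hinvn : Tendsto (fun i => (((N i).index : ℝ))⁻¹) atTop (nhds 0) :=
    (tendsto_natCast_atTop_atTop.comp (tendsto_index_atTop N hchain hfin hint)).inv_tendsto_atTop
  have hftend : Tendsto (fun i => ((ngen ↥(N i) : ℝ) - 1) / ((N i).index : ℝ)) atTop (nhds L) := by
    have h7 := hFtend.sub hinvn
    rw [sub_zero] at h7
    refine h7.congr fun i => ?_
    show (ngen ↥(N i) : ℝ) / ((N i).index : ℝ) - (((N i).index : ℝ))⁻¹ =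
      ((ngen ↥(N i) : ℝ) - 1) / ((N i).index : ℝ)
    rw [sub_div, one_div]
  have hβleL : β (PushoutI (fam2 f g)) ≤ L := hRGge L hftend
  -- upper bound via amalgam generation
  haveI : Group.FG (Fam G₁ G₂ true) := ‹Group.FG G₁›
  haveI : Group.FG (Fam G₁ G₂ false) := ‹Group.FG G₂›
  haveI : Group.FG ↥Ar :=
    Group.fg_of_surjective (f := eA.toMonoidHom) (show Function.Surjective ⇑eA.toMonoidHom from eA.surjective)
  haveI : Group.FG ↥Br :=
    Group.fg_of_surjective (f := eB.toMonoidHom) (show Function.Surjective ⇑eB.toMonoidHom from eB.surjective)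
  have hkey : ∀ i, (ngen ↥(N i) : ℝ) / ((N i).index : ℝ) ≤
      (((ngen ↥((N i).subgroupOf Ar) : ℝ) - 1) / ((N i).relIndex Ar : ℝ) +
        (((N i).relIndex Ar : ℝ))⁻¹) +
      (((ngen ↥((N i).subgroupOf Br) : ℝ) - 1) / ((N i).relIndex Br : ℝ) +
        (((N i).relIndex Br : ℝ))⁻¹) +
      (((N i).relIndex Cr : ℝ))⁻¹ := by
    intro i
    haveI := hnorm i
    haveI : ((N i).subgroupOf Ar).FiniteIndex := ⟨hrel_ne i Ar⟩
    haveI : ((N i).subgroupOf Br).FiniteIndex := ⟨hrel_ne i Br⟩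
    haveI : Group.FG ↥((N i).subgroupOf Ar) := Subgroup.fg_of_index_ne_zero _
    haveI : Group.FG ↥((N i).subgroupOf Br) := Subgroup.fg_of_index_ne_zero _
    obtain ⟨SA, hSAcard, hSAgen⟩ := exists_ngen ↥((N i).subgroupOf Ar)
    obtain ⟨SB, hSBcard, hSBgen⟩ := exists_ngen ↥((N i).subgroupOf Br)
    have hinjA : Function.Injective (Ar.subtype.comp ((N i).subgroupOf Ar).subtype) :=
      Ar.subtype_injective.comp (Subgroup.subtype_injective _)
    have hinjB : Function.Injective (Br.subtype.comp ((N i).subgroupOf Br).subtype) :=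
      Br.subtype_injective.comp (Subgroup.subtype_injective _)
    have hFAcl : Subgroup.closure
        ((SA.image (Ar.subtype.comp ((N i).subgroupOf Ar).subtype) : Finset _) : Set _) =
        N i ⊓ Ar := by
      rw [Finset.coe_image, ← MonoidHom.map_closure, hSAgen, ← MonoidHom.range_eq_map]
      rw [MonoidHom.range_comp, Subgroup.range_subtype, Subgroup.subgroupOf_map_subtype]
    have hFBcl : Subgroup.closure
        ((SB.image (Br.subtype.comp ((N i).subgroupOf Br).subtype) : Finset _) : Set _) =
        N i ⊓ Br := by
      rw [Finset.coe_image, ← MonoidHom.map_closure, hSBgen, ← MonoidHom.range_eq_map]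
      rw [MonoidHom.range_comp, Subgroup.range_subtype, Subgroup.subgroupOf_map_subtype]
    obtain ⟨S, hSsub, hScl, hScard⟩ := amalgam_gen (N i) Ar Br Cr hAB hCA hCB (hfin i)
      (SA.image (Ar.subtype.comp ((N i).subgroupOf Ar).subtype))
      (SB.image (Br.subtype.comp ((N i).subgroupOf Br).subtype)) hFAcl hFBcl
    have hdle : ngen ↥(N i) ≤ S.card := ngen_subgroup_le (N i) S hSsub hScl
    rw [Finset.card_image_of_injective _ hinjA, Finset.card_image_of_injective _ hinjB,
      hSAcard, hSBcard] at hScard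
    -- index relations
    have hA_rel : (N i).relIndex Ar * (N i ⊔ Ar).index = (N i).index := by
      rw [← Subgroup.relIndex_sup_left]
      exact Subgroup.relIndex_mul_index le_sup_left
    have hB_rel : (N i).relIndex Br * (N i ⊔ Br).index = (N i).index := by
      rw [← Subgroup.relIndex_sup_left]
      exact Subgroup.relIndex_mul_index le_sup_left
    have hC_rel : (N i).relIndex Cr * (N i ⊔ Cr).index = (N i).index := by
      rw [← Subgroup.relIndex_sup_left]
      exact Subgroup.relIndex_mul_index le_sup_left
    have ha0 : ((N i).relIndex Ar : ℝ) ≠ 0 := Nat.cast_ne_zero.mpr (hrel_ne i Ar)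
    have hb0 : ((N i).relIndex Br : ℝ) ≠ 0 := Nat.cast_ne_zero.mpr (hrel_ne i Br)
    have hk0 : ((N i).relIndex Cr : ℝ) ≠ 0 := Nat.cast_ne_zero.mpr (hrel_ne i Cr)
    have hnA0 : ((N i ⊔ Ar).index : ℝ) ≠ 0 := by
      have : (N i ⊔ Ar).index ≠ 0 := by
        intro h0
        rw [h0, mul_zero] at hA_rel
        exact hfin i hA_rel.symm
      exact Nat.cast_ne_zero.mpr this
    have hnB0 : ((N i ⊔ Br).index : ℝ) ≠ 0 := by
      have : (N i ⊔ Br).index ≠ 0 := by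
        intro h0
        rw [h0, mul_zero] at hB_rel
        exact hfin i hB_rel.symm
      exact Nat.cast_ne_zero.mpr this
    have hnC0 : ((N i ⊔ Cr).index : ℝ) ≠ 0 := by
      have : (N i ⊔ Cr).index ≠ 0 := by
        intro h0
        rw [h0, mul_zero] at hC_rel
        exact hfin i hC_rel.symm
      exact Nat.cast_ne_zero.mpr this
    have hn0 : (0:ℝ) < ((N i).index : ℝ) := by
      exact_mod_cast Nat.pos_of_ne_zero (hfin i)
    have hA_relR : ((N i).relIndex Ar : ℝ) * ((N i ⊔ Ar).index : ℝ) = ((N i).index : ℝ) := by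
      exact_mod_cast congrArg (Nat.cast (R := ℝ)) hA_rel
    have hB_relR : ((N i).relIndex Br : ℝ) * ((N i ⊔ Br).index : ℝ) = ((N i).index : ℝ) := by
      exact_mod_cast congrArg (Nat.cast (R := ℝ)) hB_rel
    have hC_relR : ((N i).relIndex Cr : ℝ) * ((N i ⊔ Cr).index : ℝ) = ((N i).index : ℝ) := by
      exact_mod_cast congrArg (Nat.cast (R := ℝ)) hC_rel
    have hcast : (ngen ↥(N i) : ℝ) ≤
        ((N i ⊔ Ar).index : ℝ) * (ngen ↥((N i).subgroupOf Ar) : ℝ) +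
        ((N i ⊔ Br).index : ℝ) * (ngen ↥((N i).subgroupOf Br) : ℝ) +
        ((N i ⊔ Cr).index : ℝ) := by
      exact_mod_cast le_trans hdle hScard
    have e1 : (((N i ⊔ Ar).index : ℝ) * (ngen ↥((N i).subgroupOf Ar) : ℝ)) / ((N i).index : ℝ) =
        (ngen ↥((N i).subgroupOf Ar) : ℝ) / ((N i).relIndex Ar : ℝ) := by
      rw [← hA_relR]
      field_simp
    have e2 : (((N i ⊔ Br).index : ℝ) * (ngen ↥((N i).subgroupOf Br) : ℝ)) / ((N i).index : ℝ) =
        (ngen ↥((N i).subgroupOf Br) : ℝ) / ((N i).relIndex Br : ℝ) := by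
      rw [← hB_relR]
      field_simp
    have e3 : (((N i ⊔ Cr).index : ℝ)) / ((N i).index : ℝ) = (((N i).relIndex Cr : ℝ))⁻¹ := by
      rw [← hC_relR]
      field_simp
    have e4 : (ngen ↥((N i).subgroupOf Ar) : ℝ) / ((N i).relIndex Ar : ℝ) =
        ((ngen ↥((N i).subgroupOf Ar) : ℝ) - 1) / ((N i).relIndex Ar : ℝ) +
          (((N i).relIndex Ar : ℝ))⁻¹ := by
      field_simp
      ring
    have e5 : (ngen ↥((N i).subgroupOf Br) : ℝ) / ((N i).relIndex Br : ℝ) =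
        ((ngen ↥((N i).subgroupOf Br) : ℝ) - 1) / ((N i).relIndex Br : ℝ) +
          (((N i).relIndex Br : ℝ))⁻¹ := by
      field_simp
      ring
    calc (ngen ↥(N i) : ℝ) / ((N i).index : ℝ)
        ≤ (((N i ⊔ Ar).index : ℝ) * (ngen ↥((N i).subgroupOf Ar) : ℝ) +
            ((N i ⊔ Br).index : ℝ) * (ngen ↥((N i).subgroupOf Br) : ℝ) +
            ((N i ⊔ Cr).index : ℝ)) / ((N i).index : ℝ) := by gcongr
      _ = (((N i ⊔ Ar).index : ℝ) * (ngen ↥((N i).subgroupOf Ar) : ℝ)) / ((N i).index : ℝ) +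
          (((N i ⊔ Br).index : ℝ) * (ngen ↥((N i).subgroupOf Br) : ℝ)) / ((N i).index : ℝ) +
          (((N i ⊔ Cr).index : ℝ)) / ((N i).index : ℝ) := by
          rw [add_div, add_div]
      _ = _ := by rw [e1, e2, e3, e4, e5]
  have hRHS : Tendsto (fun i =>
      (((ngen ↥((N i).subgroupOf Ar) : ℝ) - 1) / ((N i).relIndex Ar : ℝ) +
        (((N i).relIndex Ar : ℝ))⁻¹) +
      (((ngen ↥((N i).subgroupOf Br) : ℝ) - 1) / ((N i).relIndex Br : ℝ) +
        (((N i).relIndex Br : ℝ))⁻¹) +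
      (((N i).relIndex Cr : ℝ))⁻¹) atTop (nhds ((β G₁ + 0) + (β G₂ + 0) + 0)) :=
    ((h1.add hinvA).add (h2.add hinvB)).add hinvC
  have hLle : L ≤ β G₁ + β G₂ := by
    have h8 := le_of_tendsto_of_tendsto' hFtend hRHS hkey
    simpa using h8
  have hsum : β (PushoutI (fam2 f g)) = β G₁ + β G₂ := by
    rw [hform, Nat.card_eq_zero_of_infinite (α := G₁), Nat.card_eq_zero_of_infinite (α := G₂),
      Nat.card_eq_zero_of_infinite (α := K)]
    simp
  have hLeq : L = β (PushoutI (fam2 f g)) :=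
    le_antisymm (by rw [hsum]; exact hLle) hβleL
  exact ⟨hLeq ▸ hftend, hsum⟩
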